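/- Let V ∈ L¹ ∩ L^∞(ℝ, ℂ^{2×2}) with |V(x)| ≲ ⟨x⟩^{-1-ε} for some ε > 0, and let Ψ = (ψ₁, ψ₂) ∈ L^∞(ℝ, ℂ²) solve (D_m + V)Ψ = mΨ distributionally. Then |ψ₂(x)| ≲ ⟨x⟩^{-ε/2}/√ε for all x ∈ ℝ. -/

import Mathlib

open Real MeasureTheory intervalIntegral

lemma jbr_int {s : ℝ} (hs : 1 < s) :
    Integrable (fun t : ℝ => Real.sqrt (1 + t ^ 2) ^ (-s)) volume := by
  have h := integrable_rpow_neg_one_add_norm_sq (E := ℝ) (μ := volume) (r := s)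
    (by simpa using hs)
  refine h.congr (Filter.Eventually.of_forall fun t => ?_)
  have h0 : (0:ℝ) ≤ 1 + t ^ 2 := by positivity
  show (1 + ‖t‖ ^ 2) ^ (-s / 2) = Real.sqrt (1 + t ^ 2) ^ (-s)
  rw [Real.norm_eq_abs, sq_abs, show -s/2 = (1/2)*(-s) by ring, Real.rpow_mul h0,
    ← Real.sqrt_eq_rpow]

lemma key_half (ε : ℝ) (hε : 0 < ε) (c : ℂ) (hc : c ≠ 0)
    (f g ψ1 ψ2 : ℝ → ℂ) (D Cb : ℝ)
    (hf : Integrable f volume) (hg : Integrable g volume)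
    (hfD : ∀ t, ‖f t‖ ≤ D * Real.sqrt (1 + t ^ 2) ^ (-(1 + ε)))
    (hb1 : ∀ x, ‖ψ1 x‖ ≤ Cb)
    (h2 : ∀ x, ψ2 x = ψ2 0 + ∫ t in (0:ℝ)..x, f t)
    (h1 : ∀ x, ψ1 x = ψ1 0 + ∫ t in (0:ℝ)..x, (g t + c * ψ2 t)) :
    ∀ x, 0 ≤ x → ‖ψ2 x‖ ≤
      (D * ∫ t : ℝ, Real.sqrt (1 + t ^ 2) ^ (-(1 + ε / 2))) *
        Real.sqrt (1 + x ^ 2) ^ (-(ε / 2)) := by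
  have hD : 0 ≤ D := by
    have h0 := hfD 0
    have : Real.sqrt (1 + (0:ℝ) ^ 2) ^ (-(1 + ε)) = 1 := by norm_num
    rw [this, mul_one] at h0
    exact le_trans (norm_nonneg _) h0
  have hCb : 0 ≤ Cb := le_trans (norm_nonneg _) (hb1 0)
  -- continuity of ψ2
  have hψ2cont : Continuous ψ2 :=
    (continuous_const.add (hf.continuous_primitive 0)).congr fun x => (h2 x).symm
  have hψ2I : ∀ a b : ℝ, IntervalIntegrable ψ2 volume a b :=
    fun a b => hψ2cont.intervalIntegrable a b
  set L : ℂ := ψ2 0 + ∫ t in Set.Ioi (0:ℝ), f t with hLdef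
  have htend : Filter.Tendsto ψ2 Filter.atTop (nhds L) := by
    have h := intervalIntegral_tendsto_integral_Ioi 0 hf.integrableOn Filter.tendsto_id
    exact (Filter.Tendsto.const_add (ψ2 0) h).congr fun x => (h2 x).symm
  have hL : L = 0 := by
    by_contra hL0
    have hnL : 0 < ‖L‖ := norm_pos_iff.mpr hL0
    obtain ⟨R0, hR0⟩ := (Metric.tendsto_atTop.mp htend (‖L‖ / 2) (by linarith))
    set R : ℝ := max R0 0 with hRdef
    set M : ℝ := 2 * Cb + ∫ t, ‖g t‖ with hMdef
    have hMnn : 0 ≤ M := by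
      have h' : 0 ≤ ∫ t, ‖g t‖ := integral_nonneg fun t => norm_nonneg _
      rw [hMdef]; linarith
    have hM : ∀ x, 0 ≤ x → ‖c * ∫ t in (0:ℝ)..x, ψ2 t‖ ≤ M := by
      intro x hx
      have hsplit : (∫ t in (0:ℝ)..x, (g t + c * ψ2 t)) =
          (∫ t in (0:ℝ)..x, g t) + c * ∫ t in (0:ℝ)..x, ψ2 t := by
        rw [intervalIntegral.integral_add hg.intervalIntegrable
          ((hψ2I 0 x).const_mul c), intervalIntegral.integral_const_mul]
      have hrw : c * ∫ t in (0:ℝ)..x, ψ2 t =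
          ψ1 x - ψ1 0 - ∫ t in (0:ℝ)..x, g t := by
        have := h1 x
        rw [hsplit] at this
        rw [this]; ring
      have hgb : ‖∫ t in (0:ℝ)..x, g t‖ ≤ ∫ t, ‖g t‖ := by
        refine le_trans (intervalIntegral.norm_integral_le_integral_norm hx) ?_
        rw [intervalIntegral.integral_of_le hx]
        exact setIntegral_le_integral hg.norm
          (Filter.Eventually.of_forall fun t => norm_nonneg _)
      rw [hrw]
      calc ‖ψ1 x - ψ1 0 - ∫ t in (0:ℝ)..x, g t‖
          ≤ ‖ψ1 x - ψ1 0‖ + ‖∫ t in (0:ℝ)..x, g t‖ := norm_sub_le _ _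
        _ ≤ (‖ψ1 x‖ + ‖ψ1 0‖) + ∫ t, ‖g t‖ := add_le_add (norm_sub_le _ _) hgb
        _ ≤ M := by rw [hMdef]; have := hb1 x; have := hb1 0; linarith
    set A : ℝ := ‖∫ t in (0:ℝ)..R, ψ2 t‖ with hAdef
    have hineq : ∀ x, R ≤ x → ‖c‖ * ((x - R) * (‖L‖ / 2) - A) ≤ M := by
      intro x hx
      set I1 : ℂ := ∫ t in (0:ℝ)..R, ψ2 t with hI1
      set I2 : ℂ := ∫ t in R..x, (ψ2 t - L) with hI2
      set z : ℂ := ((x - R : ℝ) : ℂ) * L with hz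
      have hdec : (∫ t in (0:ℝ)..x, ψ2 t) = I1 + (I2 + z) := by
        rw [hI1, hI2, hz,
          intervalIntegral.integral_add_adjacent_intervals (hψ2I 0 R) (hψ2I R x) |>.symm]
        congr 1
        rw [intervalIntegral.integral_sub (hψ2I R x) intervalIntegrable_const,
          intervalIntegral.integral_const, Complex.real_smul]
        ring
      have habs : |x - R| = x - R := abs_of_nonneg (by linarith)
      have hznorm : ‖z‖ = (x - R) * ‖L‖ := by
        rw [hz, norm_mul, Complex.norm_real, Real.norm_eq_abs, habs]
      have hsmall : ‖I2‖ ≤ ‖L‖ / 2 * (x - R) := by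
        rw [hI2]
        have := intervalIntegral.norm_integral_le_of_norm_le_const
          (f := fun t => ψ2 t - L) (C := ‖L‖ / 2) (a := R) (b := x) ?_
        · rwa [habs] at this
        · intro t ht
          rw [Set.uIoc_of_le hx] at ht
          have htR0 : R0 ≤ t := le_trans (le_max_left _ _) ht.1.le
          have hd := hR0 t htR0
          rw [dist_eq_norm] at hd
          exact hd.le
      have htri : ‖z‖ ≤ ‖I1 + (I2 + z)‖ + ‖I1‖ + ‖I2‖ := by
        have he : z = (I1 + (I2 + z)) - I1 - I2 := by ring
        calc ‖z‖ = ‖(I1 + (I2 + z)) - I1 - I2‖ := by rw [← he]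
          _ ≤ ‖(I1 + (I2 + z)) - I1‖ + ‖I2‖ := norm_sub_le _ _
          _ ≤ (‖I1 + (I2 + z)‖ + ‖I1‖) + ‖I2‖ := add_le_add_left (norm_sub_le _ _) _
      have hMx := hM x (le_trans (le_max_right _ _) hx)
      rw [norm_mul, hdec] at hMx
      have hcn : 0 ≤ ‖c‖ := norm_nonneg c
      have hlow : (x - R) * (‖L‖ / 2) - A ≤ ‖I1 + (I2 + z)‖ := by
        rw [hAdef]
        linarith [hznorm ▸ htri]
      nlinarith [mul_le_mul_of_nonneg_left hlow hcn]
    -- contradiction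
    have hcpos : 0 < ‖c‖ := norm_pos_iff.mpr hc
    have hden : 0 < ‖c‖ * (‖L‖ / 2) := by
      apply mul_pos hcpos; linarith
    have hAnn : 0 ≤ A := norm_nonneg _
    set B : ℝ := (M + ‖c‖ * A) / (‖c‖ * (‖L‖ / 2)) with hBdef
    have hBnn : 0 ≤ B := by
      rw [hBdef]
      apply div_nonneg _ hden.le
      have : 0 ≤ ‖c‖ * A := mul_nonneg (norm_nonneg _) hAnn
      linarith
    have hx : R ≤ R + B + 1 := by linarith
    have := hineq (R + B + 1) hx
    have hexp : ‖c‖ * ((R + B + 1 - R) * (‖L‖ / 2) - A) =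
        (B + 1) * (‖c‖ * (‖L‖ / 2)) - ‖c‖ * A := by ring
    rw [hexp] at this
    have hBmul : B * (‖c‖ * (‖L‖ / 2)) = M + ‖c‖ * A := by
      rw [hBdef, div_mul_cancel₀ _ hden.ne']
    nlinarith
  -- now L = 0; decay bound
  intro x hx
  have hK : Integrable (fun t : ℝ => Real.sqrt (1 + t ^ 2) ^ (-(1 + ε / 2))) volume :=
    jbr_int (by linarith)
  have hval : ψ2 x = -∫ t in Set.Ioi x, f t := by
    have hIoi : (∫ t in Set.Ioi (0:ℝ), f t) =
        (∫ t in Set.Ioc 0 x, f t) + ∫ t in Set.Ioi x, f t := by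
      rw [← Set.Ioc_union_Ioi_eq_Ioi hx,
        setIntegral_union Set.Ioc_disjoint_Ioi_same measurableSet_Ioi
          hf.integrableOn hf.integrableOn]
    have h2x := h2 x
    rw [intervalIntegral.integral_of_le hx] at h2x
    have hL' : ψ2 0 + ∫ t in Set.Ioi (0:ℝ), f t = 0 := hL
    rw [hIoi] at hL'
    rw [h2x]
    linear_combination hL'
  have hax : (1:ℝ) ≤ Real.sqrt (1 + x ^ 2) := by
    have := Real.sqrt_le_sqrt (show (1:ℝ) ≤ 1 + x ^ 2 by nlinarith)
    simpa using this
  have hpt : ∀ t ∈ Set.Ioi x, ‖f t‖ ≤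
      (D * Real.sqrt (1 + x ^ 2) ^ (-(ε / 2))) *
        Real.sqrt (1 + t ^ 2) ^ (-(1 + ε / 2)) := by
    intro t ht
    have htx : x ≤ t := le_of_lt ht
    have hbt : Real.sqrt (1 + x ^ 2) ≤ Real.sqrt (1 + t ^ 2) := by
      apply Real.sqrt_le_sqrt; nlinarith
    have hap : (0:ℝ) < Real.sqrt (1 + x ^ 2) := by linarith
    have hbp : (0:ℝ) < Real.sqrt (1 + t ^ 2) := by linarith
    have hsplitexp : Real.sqrt (1 + t ^ 2) ^ (-(1 + ε)) =
        Real.sqrt (1 + t ^ 2) ^ (-(1 + ε / 2)) *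
          Real.sqrt (1 + t ^ 2) ^ (-(ε / 2)) := by
      rw [← Real.rpow_add hbp]; ring_nf
    have hmono : Real.sqrt (1 + t ^ 2) ^ (-(ε / 2)) ≤
        Real.sqrt (1 + x ^ 2) ^ (-(ε / 2)) :=
      Real.rpow_le_rpow_of_nonpos hap hbt (by linarith)
    calc ‖f t‖ ≤ D * Real.sqrt (1 + t ^ 2) ^ (-(1 + ε)) := hfD t
      _ = D * (Real.sqrt (1 + t ^ 2) ^ (-(1 + ε / 2)) *
          Real.sqrt (1 + t ^ 2) ^ (-(ε / 2))) := by rw [hsplitexp]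
      _ ≤ D * (Real.sqrt (1 + t ^ 2) ^ (-(1 + ε / 2)) *
          Real.sqrt (1 + x ^ 2) ^ (-(ε / 2))) := by
          apply mul_le_mul_of_nonneg_left _ hD
          exact mul_le_mul_of_nonneg_left hmono (Real.rpow_nonneg hbp.le _)
      _ = (D * Real.sqrt (1 + x ^ 2) ^ (-(ε / 2))) *
          Real.sqrt (1 + t ^ 2) ^ (-(1 + ε / 2)) := by ring
  have hconstnn : 0 ≤ D * Real.sqrt (1 + x ^ 2) ^ (-(ε / 2)) := by
    apply mul_nonneg hD (Real.rpow_nonneg (Real.sqrt_nonneg _) _)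
  calc ‖ψ2 x‖ = ‖∫ t in Set.Ioi x, f t‖ := by rw [hval, norm_neg]
    _ ≤ ∫ t in Set.Ioi x, ‖f t‖ := MeasureTheory.norm_integral_le_integral_norm _
    _ ≤ ∫ t in Set.Ioi x, (D * Real.sqrt (1 + x ^ 2) ^ (-(ε / 2))) *
          Real.sqrt (1 + t ^ 2) ^ (-(1 + ε / 2)) := by
        refine setIntegral_mono_on hf.norm.integrableOn
          ((hK.const_mul _).integrableOn) measurableSet_Ioi hpt
    _ ≤ ∫ t : ℝ, (D * Real.sqrt (1 + x ^ 2) ^ (-(ε / 2))) *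
          Real.sqrt (1 + t ^ 2) ^ (-(1 + ε / 2)) := by
        refine setIntegral_le_integral (hK.const_mul _)
          (Filter.Eventually.of_forall fun t => ?_)
        exact mul_nonneg hconstnn (Real.rpow_nonneg (Real.sqrt_nonneg _) _)
    _ = (D * ∫ t : ℝ, Real.sqrt (1 + t ^ 2) ^ (-(1 + ε / 2))) *
          Real.sqrt (1 + x ^ 2) ^ (-(ε / 2)) := by
        rw [MeasureTheory.integral_const_mul]; ring

lemma refl_int (F : ℝ → ℂ) (x : ℝ) :
    (∫ t in (0:ℝ)..x, -F (-t)) = ∫ t in (0:ℝ)..(-x), F t := by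
  rw [intervalIntegral.integral_neg, intervalIntegral.integral_comp_neg, neg_zero,
    intervalIntegral.integral_symm, neg_neg]

/-- If moreover `|V(x)| ≲ ⟨x⟩^{-1-ε}`, then `|ψ₂(x)| ≲ ⟨x⟩^{-ε/2}/√ε`. -/
theorem stmt15 (m ε : ℝ) (hm : 0 < m) (hε : 0 < ε)
    (V : ℝ → (Fin 2 → ℂ) →L[ℂ] (Fin 2 → ℂ)) (CV CΨ : ℝ)
    (hVinf : ∀ x, ‖V x‖ ≤ CV)
    (hV1 : Integrable (fun x => ‖V x‖) volume)
    (hVdecay : ∃ C, ∀ x, ‖V x‖ ≤ C * Real.sqrt (1 + x ^ 2) ^ (-(1 + ε)))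
    (ψ1 ψ2 : ℝ → ℂ)
    (hΨ : ∀ x, ‖(![ψ1 x, ψ2 x] : Fin 2 → ℂ)‖ ≤ CΨ)
    (hmeas : AEStronglyMeasurable (fun t => V t ![ψ1 t, ψ2 t]) volume)
    (heq1 : ∀ x, ψ1 x = ψ1 0 +
      ∫ t in (0:ℝ)..x, (V t ![ψ1 t, ψ2 t] 1 - 2 * (m : ℂ) * ψ2 t))
    (heq2 : ∀ x, ψ2 x = ψ2 0 + ∫ t in (0:ℝ)..x, (-(V t ![ψ1 t, ψ2 t] 0))) :
    ∃ C', ∀ x, ‖ψ2 x‖ ≤ C' * Real.sqrt (1 + x ^ 2) ^ (-(ε / 2)) / Real.sqrt ε := by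
  obtain ⟨C, hC⟩ := hVdecay
  have hCΨ : 0 ≤ CΨ := le_trans (norm_nonneg _) (hΨ 0)
  set f : ℝ → ℂ := fun t => -(V t ![ψ1 t, ψ2 t] 0) with hfdef
  set g : ℝ → ℂ := fun t => V t ![ψ1 t, ψ2 t] 1 with hgdef
  have hmeas0 : AEStronglyMeasurable (fun t => V t ![ψ1 t, ψ2 t] 0) volume :=
    (continuous_apply (0 : Fin 2)).comp_aestronglyMeasurable hmeas
  have hmeas1 : AEStronglyMeasurable g volume :=
    (continuous_apply (1 : Fin 2)).comp_aestronglyMeasurable hmeas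
  have hVΨb : ∀ (t : ℝ) (i : Fin 2), ‖V t ![ψ1 t, ψ2 t] i‖ ≤ ‖V t‖ * CΨ := fun t i =>
    le_trans (norm_le_pi_norm _ i)
      (le_trans ((V t).le_opNorm _)
        (mul_le_mul_of_nonneg_left (hΨ t) (norm_nonneg _)))
  have hfint : Integrable f volume := by
    refine (hV1.mul_const CΨ).mono' hmeas0.neg (Filter.Eventually.of_forall fun t => ?_)
    simpa [hfdef] using hVΨb t 0
  have hgint : Integrable g volume := by
    refine (hV1.mul_const CΨ).mono' hmeas1 (Filter.Eventually.of_forall fun t => ?_)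
    exact hVΨb t 1
  have hfD : ∀ t, ‖f t‖ ≤ (C * CΨ) * Real.sqrt (1 + t ^ 2) ^ (-(1 + ε)) := by
    intro t
    have h1 := hVΨb t 0
    have h2 := mul_le_mul_of_nonneg_right (hC t) hCΨ
    calc ‖f t‖ = ‖V t ![ψ1 t, ψ2 t] 0‖ := norm_neg _
      _ ≤ ‖V t‖ * CΨ := h1
      _ ≤ C * Real.sqrt (1 + t ^ 2) ^ (-(1 + ε)) * CΨ := h2
      _ = (C * CΨ) * Real.sqrt (1 + t ^ 2) ^ (-(1 + ε)) := by ring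
  have hb1 : ∀ x, ‖ψ1 x‖ ≤ CΨ := fun x =>
    le_trans (by simpa using norm_le_pi_norm (![ψ1 x, ψ2 x]) 0) (hΨ x)
  set c : ℂ := -(2 * (m : ℂ)) with hcdef
  have hcne : c ≠ 0 := by
    rw [hcdef]
    simp only [ne_eq, neg_eq_zero, mul_eq_zero, not_or]
    exact ⟨two_ne_zero, Complex.ofReal_ne_zero.mpr hm.ne'⟩
  have h1' : ∀ x, ψ1 x = ψ1 0 + ∫ t in (0:ℝ)..x, (g t + c * ψ2 t) := by
    intro x
    rw [heq1 x]
    congr 1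
    apply intervalIntegral.integral_congr
    intro t _
    rw [hgdef, hcdef]; ring
  have Hpos := key_half ε hε c hcne f g ψ1 ψ2 (C * CΨ) CΨ hfint hgint hfD hb1 heq2 h1'
  -- reflected versions
  have h2r : ∀ x, ψ2 (-x) = ψ2 (-(0:ℝ)) + ∫ t in (0:ℝ)..x, -f (-t) := by
    intro x
    rw [refl_int f x, neg_zero]
    exact heq2 (-x)
  have h1r : ∀ x, ψ1 (-x) = ψ1 (-(0:ℝ)) + ∫ t in (0:ℝ)..x, (-g (-t) + (-c) * ψ2 (-t)) := by
    intro x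
    have hcongr : (∫ t in (0:ℝ)..x, (-g (-t) + (-c) * ψ2 (-t))) =
        ∫ t in (0:ℝ)..x, -((fun s => g s + c * ψ2 s) (-t)) := by
      apply intervalIntegral.integral_congr
      intro t _
      simp only []
      ring
    rw [hcongr, refl_int (fun s => g s + c * ψ2 s) x, neg_zero]
    exact h1' (-x)
  have Hneg := key_half ε hε (-c) (neg_ne_zero.mpr hcne)
    (fun t => -f (-t)) (fun t => -g (-t)) (fun t => ψ1 (-t)) (fun t => ψ2 (-t))
    (C * CΨ) CΨ hfint.comp_neg.neg hgint.comp_neg.neg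
    (fun t => by simpa [neg_sq] using hfD (-t))
    (fun x => hb1 (-x)) h2r h1r
  -- conclusion
  set K : ℝ := ∫ t : ℝ, Real.sqrt (1 + t ^ 2) ^ (-(1 + ε / 2)) with hKdef
  have hsε : Real.sqrt ε ≠ 0 := (Real.sqrt_pos.mpr hε).ne'
  refine ⟨(C * CΨ * K) * Real.sqrt ε, fun x => ?_⟩
  have hdiv : ∀ a : ℝ, (C * CΨ * K) * Real.sqrt ε * a / Real.sqrt ε = (C * CΨ * K) * a := by
    intro a
    field_simp
  rw [hdiv]
  rcases le_total 0 x with h | h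
  · exact Hpos x h
  · have := Hneg (-x) (by linarith)
    simpa [neg_sq] using this
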